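/- Let I ⊆ ℝ be an open interval and φ : I → ℝ twice differentiable with φ > 0 on I. Let ζ, η, p be real numbers with ζ ≠ 0, η ≠ 0, ζ − p ≠ 0 and η − p·ζ ≠ 0. Then on I: (ζ²/η)·(φ^{η/ζ})''/φ^{η/ζ} − (p/ζ)·(φ^ζ)''/φ^ζ = ((ζ − p)²/(η − p·ζ))·ψ''/ψ, where ψ := φ^{(η − p·ζ)/(ζ − p)}. -/

import Mathlib

private lemma second_deriv_rpow_aux (I : Set ℝ) (hIopen : IsOpen I) (φ : ℝ → ℝ)
    (hφ : ∀ x ∈ I, DifferentiableAt ℝ φ x)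
    (hφ' : ∀ x ∈ I, DifferentiableAt ℝ (deriv φ) x)
    (hφpos : ∀ x ∈ I, 0 < φ x) (t : ℝ) {x : ℝ} (hx : x ∈ I) :
    deriv (deriv (fun y => φ y ^ t)) x
      = t * (t - 1) * φ x ^ (t - 2) * (deriv φ x) ^ 2
        + t * φ x ^ (t - 1) * deriv (deriv φ) x := by
  have h1 : ∀ y ∈ I, deriv (fun z => φ z ^ t) y = deriv φ y * t * φ y ^ (t - 1) := by
    intro y hy
    exact (((hφ y hy).hasDerivAt).rpow_const (Or.inl (hφpos y hy).ne')).deriv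
  have hev : deriv (fun z => φ z ^ t) =ᶠ[nhds x] fun y => deriv φ y * t * φ y ^ (t - 1) := by
    filter_upwards [hIopen.mem_nhds hx] with y hy using h1 y hy
  rw [hev.deriv_eq]
  have h2 : HasDerivAt (fun y => φ y ^ (t - 1))
      (deriv φ x * (t - 1) * φ x ^ (t - 1 - 1)) x :=
    ((hφ x hx).hasDerivAt).rpow_const (Or.inl (hφpos x hx).ne')
  have h3 : HasDerivAt (fun y => deriv φ y * t * φ y ^ (t - 1))
      (((deriv (deriv φ) x) * t) * φ x ^ (t - 1)
        + (deriv φ x * t) * (deriv φ x * (t - 1) * φ x ^ (t - 1 - 1))) x :=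
    ((hφ' x hx).hasDerivAt.mul_const t).mul h2
  rw [h3.deriv]
  have h4 : t - 1 - 1 = t - 2 := by ring
  rw [h4]; ring

private lemma ratio_aux (a u v t : ℝ) (ha : 0 < a) :
    (t * (t - 1) * a ^ (t - 2) * u ^ 2 + t * a ^ (t - 1) * v) / a ^ t
      = t * (t - 1) * (u / a) ^ 2 + t * (v / a) := by
  have h2 : a ^ (t - 2) = a ^ t / a ^ 2 := by
    rw [Real.rpow_sub ha]
    norm_num [Real.rpow_natCast a 2]
  have h1 : a ^ (t - 1) = a ^ t / a := by
    rw [Real.rpow_sub ha, Real.rpow_one]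
  rw [h1, h2]
  have hat : a ^ t ≠ 0 := (Real.rpow_pos_of_pos ha t).ne'
  field_simp

/-- The analytic identity underlying Corollary 4.5 of the paper: for `φ > 0`
twice differentiable on an open interval `I` and reals `ζ ≠ 0`, `η ≠ 0`,
`ζ - p ≠ 0`, `η - pζ ≠ 0`, with `ψ = φ^{(η - pζ)/(ζ - p)}`,
`(ζ²/η)(φ^{η/ζ})''/φ^{η/ζ} - (p/ζ)(φ^ζ)''/φ^ζ = ((ζ-p)²/(η-pζ)) ψ''/ψ` on `I`. -/
theorem stmt_9 (I : Set ℝ) (hIopen : IsOpen I) (hIconn : I.OrdConnected)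
    (φ : ℝ → ℝ)
    (hφ : ∀ x ∈ I, DifferentiableAt ℝ φ x)
    (hφ' : ∀ x ∈ I, DifferentiableAt ℝ (deriv φ) x)
    (hφpos : ∀ x ∈ I, 0 < φ x)
    (ζ η p : ℝ) (hζ : ζ ≠ 0) (hη : η ≠ 0) (hζp : ζ - p ≠ 0) (hηp : η - p * ζ ≠ 0)
    (ψ : ℝ → ℝ) (hψ : ψ = fun y => φ y ^ ((η - p * ζ) / (ζ - p))) :
    ∀ x ∈ I,
      (ζ ^ 2 / η) * (deriv (deriv (fun y => φ y ^ (η / ζ))) x / φ x ^ (η / ζ)) -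
        (p / ζ) * (deriv (deriv (fun y => φ y ^ ζ)) x / φ x ^ ζ) =
      ((ζ - p) ^ 2 / (η - p * ζ)) * (deriv (deriv ψ) x / ψ x) := by
  intro x hx
  subst hψ
  set q : ℝ := (η - p * ζ) / (ζ - p) with hq
  have hpos := hφpos x hx
  rw [second_deriv_rpow_aux I hIopen φ hφ hφ' hφpos (η / ζ) hx,
      second_deriv_rpow_aux I hIopen φ hφ hφ' hφpos ζ hx,
      second_deriv_rpow_aux I hIopen φ hφ hφ' hφpos q hx,
      ratio_aux _ _ _ _ hpos, ratio_aux _ _ _ _ hpos, ratio_aux _ _ _ _ hpos]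
  set U : ℝ := (deriv φ x / φ x) ^ 2
  set V : ℝ := deriv (deriv φ) x / φ x
  rw [hq]
  have hηp' : η - ζ * p ≠ 0 := by rwa [mul_comm p ζ] at hηp
  field_simp
  ring
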